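/- Under the LATE assumptions and EMCO, for any d > 0 with P(D(1)=d>D(0)=0) > 0, the treated mean for d-type compliers is identified: (E[Y·1(D=d)|Z=1]−E[Y·1(D=d)|Z=0])/(P(D=d|Z=1)−P(D=d|Z=0)) = E[Y(d) | D(1)=d, D(0)=0]. -/

import Mathlib

open MeasureTheory ProbabilityTheory

variable {Ω : Type*}

/-- probability of a set -/
noncomputable def pr [MeasurableSpace Ω] (μ : MeasureTheory.Measure Ω) (A : Set Ω) : ℝ :=
  (μ A).toReal

/-- conditional probability P(A | B) -/
noncomputable def cP [MeasurableSpace Ω] (μ : MeasureTheory.Measure Ω) (A B : Set Ω) : ℝ :=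
  pr μ (A ∩ B) / pr μ B

/-- conditional expectation E[f | B] -/
noncomputable def cE [MeasurableSpace Ω] (μ : MeasureTheory.Measure Ω) (f : Ω → ℝ) (B : Set Ω) : ℝ :=
  (∫ ω in B, f ω ∂μ) / pr μ B

/-- observed treatment D = Z·D(1) + (1−Z)·D(0) -/
def obsD (Z D0 D1 : Ω → ℕ) : Ω → ℕ := fun ω => if Z ω = 1 then D1 ω else D0 ω

/-- observed outcome Y = Y(D) -/
noncomputable def obsY (Z D0 D1 : Ω → ℕ) (Yp : ℕ → Ω → ℝ) : Ω → ℝ :=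
  fun ω => Yp (obsD Z D0 D1 ω) ω

/-- Auxiliary: set integral over a level set of an independent variable factorizes. -/
lemma indep_setIntegral [MeasurableSpace Ω] {μ : Measure Ω} [IsProbabilityMeasure μ]
    {α : Type*} [MeasurableSpace α] {W : Ω → α} {Z : Ω → ℕ}
    (hZm : Measurable Z) (hindep : IndepFun W Z μ) {g : α → ℝ} (hg : Measurable g)
    (hgint : Integrable (fun ω => g (W ω)) μ) (z : ℕ) :
    ∫ ω in {ω | Z ω = z}, g (W ω) ∂μ =
      (∫ ω, g (W ω) ∂μ) * (μ {ω | Z ω = z}).toReal := by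
  have hmeas : MeasurableSet {ω | Z ω = z} := hZm (measurableSet_singleton z)
  set s : Set Ω := {ω | Z ω = z} with hs
  have hG : IndepFun (fun ω => g (W ω))
      (fun ω => ({z} : Set ℕ).indicator (fun _ => (1:ℝ)) (Z ω)) μ :=
    hindep.comp hg (measurable_const.indicator (measurableSet_singleton z))
  have hkey : (fun ω => ({z} : Set ℕ).indicator (fun _ => (1:ℝ)) (Z ω))
      = s.indicator (fun _ => (1:ℝ)) := by
    funext ω
    by_cases h : Z ω = z <;> simp [Set.indicator_apply, h, hs]
  have hGint : Integrable (fun ω => ({z} : Set ℕ).indicator (fun _ => (1:ℝ)) (Z ω)) μ := by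
    rw [hkey]; exact (integrable_const (1:ℝ)).indicator hmeas
  have hprod : (fun ω => g (W ω)) * (fun ω => ({z} : Set ℕ).indicator (fun _ => (1:ℝ)) (Z ω))
      = s.indicator (fun ω => g (W ω)) := by
    rw [hkey]; funext ω
    by_cases h : ω ∈ s <;> simp [Set.indicator_apply, h]
  have hmul := hG.integral_mul_eq_mul_integral hgint.aestronglyMeasurable hGint.aestronglyMeasurable
  rw [hprod] at hmul
  rw [← integral_indicator hmeas, hmul, hkey, integral_indicator_const (1:ℝ) hmeas]
  simp [mul_comm]
  exact Or.inl rfl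

/-- Auxiliary: the a.e. compliance identity under monotonicity and EMCO. -/
lemma emco_ae_identity [MeasurableSpace Ω] {μ : Measure Ω}
    {D0 D1 : Ω → ℕ} (hmono : ∀ᵐ ω ∂μ, D0 ω ≤ D1 ω)
    (hemco : ∀ᵐ ω ∂μ, D0 ω < D1 ω → D0 ω = 0) {d : ℕ} (hd : 0 < d) :
    ∀ᵐ ω ∂μ, ∀ f : ℝ,
      (if D1 ω = d then f else 0) - (if D0 ω = d then f else 0)
        = (if D1 ω = d ∧ D0 ω = 0 then f else 0) := by
  filter_upwards [hmono, hemco] with ω h1 h2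
  intro f
  by_cases hD0 : D0 ω = d
  · have heq : D1 ω = d := by
      rcases lt_or_eq_of_le h1 with h | h
      · exact absurd (h2 h) (by omega)
      · omega
    have : ¬ (D1 ω = d ∧ D0 ω = 0) := by omega
    simp [hD0, heq, this]
    exact fun h => absurd h (by omega)
  · by_cases hD1 : D1 ω = d
    · have hlt : D0 ω < D1 ω := by omega
      have h0 : D0 ω = 0 := h2 hlt
      simp [hD0, hD1, h0]
      exact fun h => absurd h (by omega)
    · have : ¬ (D1 ω = d ∧ D0 ω = 0) := by omega
      simp [hD0, hD1, this]

/-- identification of the treated mean for d-type compliers. -/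
theorem dtype_complier_treated_mean_identified
    [MeasurableSpace Ω] (μ : MeasureTheory.Measure Ω) [IsProbabilityMeasure μ]
    (Dbar : ℕ) (Z D0 D1 : Ω → ℕ) (Yp : ℕ → Ω → ℝ)
    (hZ01 : ∀ ω, Z ω = 0 ∨ Z ω = 1)
    (hZm : Measurable Z) (hD0m : Measurable D0) (hD1m : Measurable D1)
    (hD0b : ∀ ω, D0 ω ≤ Dbar) (hD1b : ∀ ω, D1 ω ≤ Dbar)
    (hYm : ∀ d, Measurable (Yp d)) (hYint : ∀ d, Integrable (Yp d) μ)
    (hindep : IndepFun (fun ω => (D0 ω, D1 ω, fun d => Yp d ω)) Z μ)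
    (hmono : ∀ᵐ ω ∂μ, D0 ω ≤ D1 ω)
    (hemco : ∀ᵐ ω ∂μ, D0 ω < D1 ω → D0 ω = 0)
    (hZ1pos : 0 < pr μ {ω | Z ω = 1}) (hZ1lt : pr μ {ω | Z ω = 1} < 1)
    (d : ℕ) (hd : 0 < d)
    (hdcomp : 0 < pr μ {ω | D1 ω = d ∧ D0 ω = 0}) :
    (cE μ (fun ω => if obsD Z D0 D1 ω = d then obsY Z D0 D1 Yp ω else 0) {ω | Z ω = 1} -
      cE μ (fun ω => if obsD Z D0 D1 ω = d then obsY Z D0 D1 Yp ω else 0) {ω | Z ω = 0}) /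
      (cP μ {ω | obsD Z D0 D1 ω = d} {ω | Z ω = 1} -
        cP μ {ω | obsD Z D0 D1 ω = d} {ω | Z ω = 0}) =
    cE μ (Yp d) {ω | D1 ω = d ∧ D0 ω = 0} := by
  classical
  set W : Ω → ℕ × ℕ × (ℕ → ℝ) := fun ω => (D0 ω, D1 ω, fun d => Yp d ω) with hW
  have hWm : Measurable W :=
    hD0m.prodMk (hD1m.prodMk (measurable_pi_lambda _ fun d => hYm d))
  -- measurable sets
  have hZ1meas : MeasurableSet {ω | Z ω = 1} := hZm (measurableSet_singleton 1)
  have hZ0meas : MeasurableSet {ω | Z ω = 0} := hZm (measurableSet_singleton 0)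
  have hD1meas : MeasurableSet {ω | D1 ω = d} := hD1m (measurableSet_singleton d)
  have hD0meas : MeasurableSet {ω | D0 ω = d} := hD0m (measurableSet_singleton d)
  have hCmeas : MeasurableSet {ω | D1 ω = d ∧ D0 ω = 0} := by
    have : {ω | D1 ω = d ∧ D0 ω = 0} = {ω | D1 ω = d} ∩ {ω | D0 ω = 0} := rfl
    rw [this]
    exact (hD1m (measurableSet_singleton d)).inter (hD0m (measurableSet_singleton 0))
  -- the g functions
  set g1 : ℕ × ℕ × (ℕ → ℝ) → ℝ := fun p => if p.2.1 = d then p.2.2 d else 0 with hg1def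
  set g0 : ℕ × ℕ × (ℕ → ℝ) → ℝ := fun p => if p.1 = d then p.2.2 d else 0 with hg0def
  set q1 : ℕ × ℕ × (ℕ → ℝ) → ℝ := fun p => if p.2.1 = d then (1:ℝ) else 0 with hq1def
  set q0 : ℕ × ℕ × (ℕ → ℝ) → ℝ := fun p => if p.1 = d then (1:ℝ) else 0 with hq0def
  have hval : Measurable fun p : ℕ × ℕ × (ℕ → ℝ) => p.2.2 d :=
    (measurable_pi_apply d).comp (measurable_snd.comp measurable_snd)
  have hs1 : MeasurableSet {p : ℕ × ℕ × (ℕ → ℝ) | p.2.1 = d} :=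
    (measurable_fst.comp measurable_snd) (measurableSet_singleton d)
  have hs0 : MeasurableSet {p : ℕ × ℕ × (ℕ → ℝ) | p.1 = d} :=
    measurable_fst (measurableSet_singleton d)
  have hg1m : Measurable g1 := Measurable.ite hs1 hval measurable_const
  have hg0m : Measurable g0 := Measurable.ite hs0 hval measurable_const
  have hq1m : Measurable q1 := Measurable.ite hs1 measurable_const measurable_const
  have hq0m : Measurable q0 := Measurable.ite hs0 measurable_const measurable_const
  -- integrability
  have hg1eq : (fun ω => g1 (W ω)) = {ω | D1 ω = d}.indicator (Yp d) := by
    funext ω; by_cases h : D1 ω = d <;> simp [Set.indicator_apply, h, hg1def, hW]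
  have hg0eq : (fun ω => g0 (W ω)) = {ω | D0 ω = d}.indicator (Yp d) := by
    funext ω; by_cases h : D0 ω = d <;> simp [Set.indicator_apply, h, hg0def, hW]
  have hq1eq : (fun ω => q1 (W ω)) = {ω | D1 ω = d}.indicator (fun _ => (1:ℝ)) := by
    funext ω; by_cases h : D1 ω = d <;> simp [Set.indicator_apply, h, hq1def, hW]
  have hq0eq : (fun ω => q0 (W ω)) = {ω | D0 ω = d}.indicator (fun _ => (1:ℝ)) := by
    funext ω; by_cases h : D0 ω = d <;> simp [Set.indicator_apply, h, hq0def, hW]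
  have hg1int : Integrable (fun ω => g1 (W ω)) μ := by
    rw [hg1eq]; exact (hYint d).indicator hD1meas
  have hg0int : Integrable (fun ω => g0 (W ω)) μ := by
    rw [hg0eq]; exact (hYint d).indicator hD0meas
  have hq1int : Integrable (fun ω => q1 (W ω)) μ := by
    rw [hq1eq]; exact (integrable_const (1:ℝ)).indicator hD1meas
  have hq0int : Integrable (fun ω => q0 (W ω)) μ := by
    rw [hq0eq]; exact (integrable_const (1:ℝ)).indicator hD0meas
  -- probabilities of Z-sets
  have hP1ne : pr μ {ω | Z ω = 1} ≠ 0 := ne_of_gt hZ1pos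
  have hZ0eq : {ω | Z ω = 0} = {ω | Z ω = 1}ᶜ := by
    ext ω; have := hZ01 ω
    simp only [Set.mem_setOf_eq, Set.mem_compl_iff]
    omega
  have hP0 : pr μ {ω | Z ω = 0} = 1 - pr μ {ω | Z ω = 1} := by
    simp only [pr]
    rw [hZ0eq, measure_compl hZ1meas (measure_ne_top μ _), measure_univ,
      ENNReal.toReal_sub_of_le prob_le_one ENNReal.one_ne_top, ENNReal.toReal_one]
  have hP0pos : 0 < pr μ {ω | Z ω = 0} := by rw [hP0]; linarith
  have hP0ne : pr μ {ω | Z ω = 0} ≠ 0 := ne_of_gt hP0pos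
  -- compute the cE terms
  have hcE1 : cE μ (fun ω => if obsD Z D0 D1 ω = d then obsY Z D0 D1 Yp ω else 0)
      {ω | Z ω = 1} = ∫ ω, g1 (W ω) ∂μ := by
    have hcong : ∫ ω in {ω | Z ω = 1},
        (if obsD Z D0 D1 ω = d then obsY Z D0 D1 Yp ω else 0) ∂μ
        = ∫ ω in {ω | Z ω = 1}, g1 (W ω) ∂μ := by
      apply setIntegral_congr_fun hZ1meas
      intro ω hω
      have hω' : Z ω = 1 := hω
      simp only [obsD, obsY, hω', if_true, hg1def, hW]
      split_ifs with h
      · rw [h]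
      · rfl
    simp only [cE, pr] at hP1ne ⊢
    rw [hcong, indep_setIntegral hZm hindep hg1m hg1int 1,
      mul_div_assoc, div_self hP1ne, mul_one]
  have hcE0 : cE μ (fun ω => if obsD Z D0 D1 ω = d then obsY Z D0 D1 Yp ω else 0)
      {ω | Z ω = 0} = ∫ ω, g0 (W ω) ∂μ := by
    have hcong : ∫ ω in {ω | Z ω = 0},
        (if obsD Z D0 D1 ω = d then obsY Z D0 D1 Yp ω else 0) ∂μ
        = ∫ ω in {ω | Z ω = 0}, g0 (W ω) ∂μ := by
      apply setIntegral_congr_fun hZ0meas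
      intro ω hω
      have hω' : Z ω = 0 := hω
      have hne : ¬ (Z ω = 1) := by omega
      simp only [obsD, obsY, hne, if_false, hg0def, hW]
      split_ifs with h
      · rw [h]
      · rfl
    simp only [cE, pr] at hP0ne ⊢
    rw [hcong, indep_setIntegral hZm hindep hg0m hg0int 0,
      mul_div_assoc, div_self hP0ne, mul_one]
  -- compute the cP terms
  have hcP1 : cP μ {ω | obsD Z D0 D1 ω = d} {ω | Z ω = 1} = (μ {ω | D1 ω = d}).toReal := by
    have hset : {ω | obsD Z D0 D1 ω = d} ∩ {ω | Z ω = 1}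
        = {ω | D1 ω = d} ∩ {ω | Z ω = 1} := by
      ext ω; by_cases h : Z ω = 1 <;>
        simp [obsD, Set.mem_inter_iff, Set.mem_setOf_eq, h]
    have hfact : μ ({ω | D1 ω = d} ∩ {ω | Z ω = 1})
        = μ {ω | D1 ω = d} * μ {ω | Z ω = 1} :=
      hindep.measure_inter_preimage_eq_mul {p : ℕ × ℕ × (ℕ → ℝ) | p.2.1 = d} {1} hs1
        (measurableSet_singleton 1)
    simp only [cP, pr] at hP1ne ⊢
    rw [hset, hfact, ENNReal.toReal_mul, mul_div_assoc, div_self hP1ne, mul_one]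
  have hcP0 : cP μ {ω | obsD Z D0 D1 ω = d} {ω | Z ω = 0} = (μ {ω | D0 ω = d}).toReal := by
    have hset : {ω | obsD Z D0 D1 ω = d} ∩ {ω | Z ω = 0}
        = {ω | D0 ω = d} ∩ {ω | Z ω = 0} := by
      ext ω
      by_cases h : Z ω = 0
      · have hne : ¬ (Z ω = 1) := by omega
        simp [obsD, Set.mem_inter_iff, Set.mem_setOf_eq, h, hne]
      · simp [Set.mem_inter_iff, Set.mem_setOf_eq, h]
    have hfact : μ ({ω | D0 ω = d} ∩ {ω | Z ω = 0})
        = μ {ω | D0 ω = d} * μ {ω | Z ω = 0} :=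
      hindep.measure_inter_preimage_eq_mul {p : ℕ × ℕ × (ℕ → ℝ) | p.1 = d} {0} hs0
        (measurableSet_singleton 0)
    simp only [cP, pr] at hP0ne ⊢
    rw [hset, hfact, ENNReal.toReal_mul, mul_div_assoc, div_self hP0ne, mul_one]
  -- express measures of D-sets as integrals
  have hp1 : (μ {ω | D1 ω = d}).toReal = ∫ ω, q1 (W ω) ∂μ := by
    rw [hq1eq, integral_indicator_const (1:ℝ) hD1meas]; simp; rfl
  have hp0 : (μ {ω | D0 ω = d}).toReal = ∫ ω, q0 (W ω) ∂μ := by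
    rw [hq0eq, integral_indicator_const (1:ℝ) hD0meas]; simp; rfl
  -- the a.e. identity
  have hae := emco_ae_identity hmono hemco hd (μ := μ)
  -- numerator
  have hnum : ∫ ω, g1 (W ω) ∂μ - ∫ ω, g0 (W ω) ∂μ
      = ∫ ω in {ω | D1 ω = d ∧ D0 ω = 0}, Yp d ω ∂μ := by
    rw [← integral_sub hg1int hg0int, ← integral_indicator hCmeas]
    apply integral_congr_ae
    filter_upwards [hae] with ω hω
    have := hω (Yp d ω)
    by_cases h : D1 ω = d ∧ D0 ω = 0 <;>
      simp only [hg1def, hg0def, hW, Set.indicator_apply, Set.mem_setOf_eq, h,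
        if_true, if_false] at this ⊢ <;> simpa using this
  -- denominator
  have hden : (μ {ω | D1 ω = d}).toReal - (μ {ω | D0 ω = d}).toReal
      = pr μ {ω | D1 ω = d ∧ D0 ω = 0} := by
    rw [hp1, hp0, ← integral_sub hq1int hq0int]
    have : ∫ ω, (q1 (W ω) - q0 (W ω)) ∂μ
        = ∫ ω, {ω | D1 ω = d ∧ D0 ω = 0}.indicator (fun _ => (1:ℝ)) ω ∂μ := by
      apply integral_congr_ae
      filter_upwards [hae] with ω hω
      have := hω (1:ℝ)
      by_cases h : D1 ω = d ∧ D0 ω = 0 <;>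
        simp only [hq1def, hq0def, hW, Set.indicator_apply, Set.mem_setOf_eq, h,
          if_true, if_false] at this ⊢ <;> simpa using this
    rw [this, integral_indicator_const (1:ℝ) hCmeas]
    simp [pr]; rfl
  rw [hcE1, hcE0, hcP1, hcP0, hnum, hden]
  rfl
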